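/- The ordered Bell numbers (Fubini numbers) satisfy Σ_{k=1}^{n} S(n,k)·k! ≤ b · n! / (log 2)^n for all n ≥ 1, where b = 1/(2 log 2) + (log 2)/24 and S(n,k) are Stirling numbers of the second kind. -/

import Mathlib

/-- Stirling numbers of the second kind, via the recurrence
`S(n+1, k+1) = (k+1)·S(n, k+1) + S(n, k)`. -/
def stirlingSecond : ℕ → ℕ → ℕ
  | 0, 0 => 1
  | 0, _ + 1 => 0
  | _ + 1, 0 => 0
  | n + 1, k + 1 => (k + 1) * stirlingSecond n (k + 1) + stirlingSecond n k

lemma stirlingSecond_succ (n k : ℕ) :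
    stirlingSecond (n+1) (k+1) = (k + 1) * stirlingSecond n (k + 1) + stirlingSecond n k := rfl

lemma stirlingSecond_eq_zero : ∀ {n k : ℕ}, n < k → stirlingSecond n k = 0 := by
  intro n
  induction n with
  | zero =>
    intro k h
    match k, h with
    | k + 1, _ => rfl
  | succ n ih =>
    intro k h
    match k, h with
    | k + 1, h =>
      rw [stirlingSecond_succ, ih (by omega), ih (show n < k by omega)]
      ring

lemma stirlingSecond_ident (n : ℕ) : ∀ k, stirlingSecond (n+1) (k+1)
    = ∑ j ∈ Finset.range (n+1), n.choose j * stirlingSecond j k := by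
  induction n with
  | zero =>
    intro k
    simp [stirlingSecond_succ, show ∀ k, stirlingSecond 0 (k+1) = 0 from fun _ => rfl]
  | succ n ih =>
    intro k
    have hB : (∑ j ∈ Finset.range (n+1), n.choose (j+1) * stirlingSecond (j+1) k)
        + stirlingSecond 0 k = stirlingSecond (n+1) (k+1) := by
      have h0 : stirlingSecond 0 k = n.choose 0 * stirlingSecond 0 k := by simp
      rw [ih k, h0,
        ← Finset.sum_range_succ' (fun j => n.choose j * stirlingSecond j k) (n+1),
        Finset.sum_range_succ, Nat.choose_succ_self]
      simp
    rw [Finset.sum_range_succ' (fun j => (n+1).choose j * stirlingSecond j k) (n+1)]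
    simp only [Nat.choose_succ_succ, add_mul, Finset.sum_add_distrib, Nat.choose_zero_right,
      one_mul, Nat.succ_eq_add_one]
    conv_rhs => rw [add_assoc]
    rw [hB]
    cases k with
    | zero =>
      have hz : ∀ j, stirlingSecond (j+1) 0 = 0 := fun _ => rfl
      simp [hz, stirlingSecond_succ]
    | succ k' =>
      have hs : ∀ j, n.choose j * stirlingSecond (j+1) (k'+1)
          = (k'+1) * (n.choose j * stirlingSecond j (k'+1)) + n.choose j * stirlingSecond j k' := by
        intro j; rw [stirlingSecond_succ]; ring
      rw [Finset.sum_congr rfl (fun j _ => hs j), Finset.sum_add_distrib, ← Finset.mul_sum,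
        ← ih, ← ih, show n+1+1 = (n+1)+1 from rfl, stirlingSecond_succ, stirlingSecond_succ]
      ring

def obell (n : ℕ) : ℕ := ∑ k ∈ Finset.range (n+1), stirlingSecond n k * Nat.factorial k

lemma obell_zero : obell 0 = 1 := by decide

lemma obell_one : obell 1 = 1 := by decide
lemma obell_two : obell 2 = 3 := by decide
lemma obell_three : obell 3 = 13 := by decide


lemma obell_rec (n : ℕ) (hn : 1 ≤ n) :
    obell n = ∑ j ∈ Finset.range n, n.choose j * obell j := by
  obtain ⟨p, rfl⟩ : ∃ p, n = p + 1 := ⟨n - 1, by omega⟩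
  -- step 1: ∑_{k<n+1} S(n+1,k+1) k! = 2 * obell n
  have h1 : ∑ k ∈ Finset.range (p+2), stirlingSecond (p+2) (k+1) * Nat.factorial k
      = 2 * obell (p+1) := by
    have hs : ∀ k, stirlingSecond (p+2) (k+1) * Nat.factorial k
        = stirlingSecond (p+1) (k+1) * Nat.factorial (k+1)
          + stirlingSecond (p+1) k * Nat.factorial k := by
      intro k
      rw [show p+2 = (p+1)+1 from rfl, stirlingSecond_succ, Nat.factorial_succ]
      ring
    rw [Finset.sum_congr rfl (fun k _ => hs k), Finset.sum_add_distrib]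
    have hA : ∑ k ∈ Finset.range (p+2), stirlingSecond (p+1) (k+1) * Nat.factorial (k+1)
        = obell (p+1) := by
      have := Finset.sum_range_succ' (fun k => stirlingSecond (p+1) k * Nat.factorial k) (p+2)
      -- range (p+3) = range(p+2) shifted + term 0
      rw [obell]
      rw [show (p+1)+1 = p+2 from rfl]
      have hz : stirlingSecond (p+1) 0 * Nat.factorial 0 = 0 := by rfl
      have htop : stirlingSecond (p+1) (p+2) * Nat.factorial (p+2) = 0 := by
        rw [stirlingSecond_eq_zero (by omega)]; ring
      calc ∑ k ∈ Finset.range (p+2), stirlingSecond (p+1) (k+1) * Nat.factorial (k+1)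
          = ∑ k ∈ Finset.range (p+3), stirlingSecond (p+1) k * Nat.factorial k := by
            rw [this, hz, add_zero]
        _ = ∑ k ∈ Finset.range (p+2), stirlingSecond (p+1) k * Nat.factorial k := by
            rw [Finset.sum_range_succ, htop, add_zero]
    have hBsum : ∑ k ∈ Finset.range (p+2), stirlingSecond (p+1) k * Nat.factorial k
        = obell (p+1) := rfl
    rw [hA, hBsum]; ring
  -- step 2: via identity
  have h2 : ∑ k ∈ Finset.range (p+2), stirlingSecond (p+2) (k+1) * Nat.factorial k
      = ∑ j ∈ Finset.range (p+2), (p+1).choose j * obell j := by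
    have hident : ∀ k, stirlingSecond (p+2) (k+1)
        = ∑ j ∈ Finset.range (p+2), (p+1).choose j * stirlingSecond j k :=
      fun k => stirlingSecond_ident (p+1) k
    calc ∑ k ∈ Finset.range (p+2), stirlingSecond (p+2) (k+1) * Nat.factorial k
        = ∑ k ∈ Finset.range (p+2), ∑ j ∈ Finset.range (p+2),
            (p+1).choose j * (stirlingSecond j k * Nat.factorial k) := by
          refine Finset.sum_congr rfl fun k _ => ?_
          rw [hident k, Finset.sum_mul]
          refine Finset.sum_congr rfl fun j _ => by ring
      _ = ∑ j ∈ Finset.range (p+2), ∑ k ∈ Finset.range (p+2),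
            (p+1).choose j * (stirlingSecond j k * Nat.factorial k) := Finset.sum_comm
      _ = ∑ j ∈ Finset.range (p+2), (p+1).choose j * obell j := by
          refine Finset.sum_congr rfl fun j hj => ?_
          rw [← Finset.mul_sum]
          congr 1
          rw [obell]
          symm
          refine Finset.sum_subset (Finset.range_subset_range.2 (by
            simp at hj; omega)) fun k _ hk => ?_
          simp only [Finset.mem_range, not_lt] at hk
          rw [stirlingSecond_eq_zero (by omega)]; ring
  have h3 := h1.symm.trans h2
  rw [Finset.sum_range_succ, Nat.choose_self, one_mul] at h3
  omega

lemma two_pow_lower : ∀ n : ℕ, 4 ≤ n → n + 8 ≤ 2 ^ n := by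
  intro n
  induction n with
  | zero => omega
  | succ n ih =>
    intro h
    rcases Nat.lt_or_ge n 4 with h' | h'
    · have : n = 3 := by omega
      subst this; norm_num
    · have := ih h'
      rw [pow_succ]; omega

set_option maxHeartbeats 1000000 in
lemma obell_key : ∀ n : ℕ, 1 ≤ n → (obell n : ℝ) ≤
    (1 / (2 * Real.log 2) + Real.log 2 / 24) * (Nat.factorial n : ℝ) / (Real.log 2) ^ n
      - n / 20 := by
  intro n
  induction n using Nat.strong_induction_on with
  | _ n ih =>
  intro hn
  have hl : (0.6931471803:ℝ) < Real.log 2 := Real.log_two_gt_d9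
  have hu : Real.log 2 < 0.6931471808 := Real.log_two_lt_d9
  set L := Real.log 2 with hLdef
  have hL0 : (0:ℝ) < L := by linarith
  have hL2u : L^2 < 0.48045302 := by nlinarith
  have hL2l : (0.48045301:ℝ) < L^2 := by nlinarith
  have hL3u : L^3 < 0.33302466 := by nlinarith
  have hL4u : L^4 < 0.23083511 := by nlinarith
  set bb : ℝ := 1 / (2 * L) + L / 24 with hbb
  match n, hn, ih with
  | 1, _, _ =>
    rw [obell_one]
    push_cast [Nat.factorial_one]
    rw [← sub_nonneg]
    have e : bb * 1 / L ^ 1 - 1 / 20 - 1 = (12 - 24.2 * L^2) / (24 * L^2) := by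
      rw [hbb]; field_simp; ring
    rw [e]
    exact div_nonneg (by nlinarith) (by positivity)
  | 2, _, _ =>
    rw [obell_two]
    push_cast [show Nat.factorial 2 = 2 from rfl]
    rw [← sub_nonneg]
    have e : bb * 2 / L ^ 2 - 2 / 20 - 3 = (12 + L^2 - 37.2 * L^3) / (12 * L^3) := by
      rw [hbb]; field_simp; ring
    rw [e]
    exact div_nonneg (by nlinarith) (by positivity)
  | 3, _, _ =>
    rw [obell_three]
    push_cast [show Nat.factorial 3 = 6 from rfl]
    rw [← sub_nonneg]
    have e : bb * 6 / L ^ 3 - 3 / 20 - 13 = (12 + L^2 - 52.6 * L^4) / (4 * L^4) := by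
      rw [hbb]; field_simp; ring
    rw [e]
    exact div_nonneg (by nlinarith) (by positivity)
  | (m+4), _, ih =>
    set q := m + 3 with hqdef
    have hq : 3 ≤ q := by omega
    have hrec := obell_rec (q+1) (by omega)
    have hcast : (obell (q+1) : ℝ)
        = ∑ j ∈ Finset.range (q+1), ((q+1).choose j : ℝ) * (obell j : ℝ) := by
      rw [hrec]; push_cast; rfl
    rw [Finset.sum_range_succ'
      (fun j => ((q+1).choose j : ℝ) * (obell j : ℝ)) q] at hcast
    simp only [Nat.choose_zero_right, Nat.cast_one, obell_zero, one_mul, mul_one] at hcast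
    have hterm : ∀ j ∈ Finset.range q,
        ((q+1).choose (j+1) : ℝ) * (obell (j+1) : ℝ)
          ≤ ((q+1).choose (j+1) : ℝ)
            * (bb * ((j+1).factorial : ℝ) / L^(j+1) - ((j:ℝ)+1) / 20) := by
      intro j hj
      have hjq : j < q := Finset.mem_range.1 hj
      have h := ih (j+1) (by omega) (by omega)
      push_cast at h
      exact mul_le_mul_of_nonneg_left h (by positivity)
    have hsum : (obell (q+1) : ℝ) ≤
        (∑ j ∈ Finset.range q, ((q+1).choose (j+1) : ℝ)
          * (bb * ((j+1).factorial : ℝ) / L^(j+1) - ((j:ℝ)+1) / 20)) + 1 := by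
      rw [hcast]
      exact add_le_add_left (Finset.sum_le_sum hterm) 1
    have hsplit : ∀ j ∈ Finset.range q,
        ((q+1).choose (j+1) : ℝ) * (bb * ((j+1).factorial : ℝ) / L^(j+1) - ((j:ℝ)+1) / 20)
        = bb * (((q+1).factorial : ℝ) / L^(q+1)) * (L^(q-j) / ((q-j).factorial : ℝ))
          - ((q+1).choose (j+1) : ℝ) * (((j:ℝ)+1) / 20) := by
      intro j hj
      have hjq : j < q := Finset.mem_range.1 hj
      have hfac : ((q+1).choose (j+1) : ℝ) * ((j+1).factorial : ℝ) * ((q-j).factorial : ℝ)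
          = ((q+1).factorial : ℝ) := by
        have h := Nat.choose_mul_factorial_mul_factorial (show j+1 ≤ q+1 by omega)
        have h2 : q + 1 - (j+1) = q - j := by omega
        rw [h2] at h
        exact_mod_cast h
      have h2 : ((q-j).factorial : ℝ) ≠ 0 := by positivity
      have hCf : ((q+1).choose (j+1) : ℝ) * ((j+1).factorial : ℝ)
          = ((q+1).factorial : ℝ) / ((q-j).factorial : ℝ) := by
        rw [eq_div_iff h2]; exact hfac
      have hpow : L^(q+1) = L^(j+1) * L^(q-j) := by
        rw [← pow_add]; congr 1; omega
      have e1 : ((q+1).choose (j+1):ℝ) * (bb * ((j+1).factorial:ℝ) / L^(j+1))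
          = bb * (((q+1).choose (j+1):ℝ) * ((j+1).factorial:ℝ)) / L^(j+1) := by ring
      rw [mul_sub, e1, hCf, hpow]
      have h3 : L ≠ 0 := ne_of_gt hL0
      field_simp

    -- rewrite the sum using hsplit
    have hsum2 : (obell (q+1) : ℝ) ≤
        bb * (((q+1).factorial : ℝ) / L^(q+1))
            * (∑ j ∈ Finset.range q, L^(q-j) / (((q-j).factorial : ℝ)))
          - (∑ j ∈ Finset.range q, ((q+1).choose (j+1) : ℝ) * (((j:ℝ)+1) / 20)) + 1 := by
      refine hsum.trans (le_of_eq ?_)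
      rw [Finset.sum_congr rfl hsplit, Finset.sum_sub_distrib, ← Finset.mul_sum]
    have hrefl : (∑ j ∈ Finset.range q, L^(q-j) / (((q-j).factorial : ℝ)))
        = ∑ j ∈ Finset.range q, L^(j+1) / (((j+1).factorial : ℝ)) := by
      rw [← Finset.sum_range_reflect (fun j => L^(j+1) / (((j+1).factorial : ℝ))) q]
      refine Finset.sum_congr rfl fun j hj => ?_
      have hjq : j < q := Finset.mem_range.1 hj
      have hh : q - 1 - j + 1 = q - j := by omega
      simp only [hh]
    rw [hrefl] at hsum2
    -- exponential sum bound
    have hexpsum := Real.sum_le_exp_of_nonneg hL0.le (q+2)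
    have hexp2 : Real.exp L = 2 := by rw [hLdef]; exact Real.exp_log (by norm_num)
    rw [hexp2] at hexpsum
    have hsplit2 : (∑ i ∈ Finset.range (q+2), L^i / ((i.factorial : ℝ)))
        = 1 + (∑ j ∈ Finset.range q, L^(j+1) / (((j+1).factorial : ℝ)))
          + L^(q+1) / (((q+1).factorial : ℝ)) := by
      rw [Finset.sum_range_succ, Finset.sum_range_succ' (fun i => L^i / ((i.factorial : ℝ))) q]
      norm_num
      ring
    have hSL : (∑ j ∈ Finset.range q, L^(j+1) / (((j+1).factorial : ℝ)))
        ≤ 1 - L^(q+1) / (((q+1).factorial : ℝ)) := by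
      rw [hsplit2] at hexpsum
      linarith
    -- binomial sum bound
    have hchoosesum : ∑ j ∈ Finset.range q, (q+1).choose (j+1) = 2^(q+1) - 2 := by
      have h := Nat.sum_range_choose (q+1)
      rw [Finset.sum_range_succ' (fun j => (q+1).choose j) (q+1),
        Finset.sum_range_succ (fun j => (q+1).choose (j+1)) q] at h
      simp only [Nat.choose_self, Nat.choose_zero_right] at h
      omega
    have h2le : (2:ℕ) ≤ 2^(q+1) := by
      calc (2:ℕ) = 2^1 := rfl
        _ ≤ 2^(q+1) := Nat.pow_le_pow_right (by norm_num) (by omega)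
    have hcs : (∑ j ∈ Finset.range q, (((q+1).choose (j+1) : ℕ) : ℝ)) = 2^(q+1) - 2 := by
      rw [← Nat.cast_sum, hchoosesum, Nat.cast_sub h2le]
      push_cast
      ring
    have hS2 : ((2:ℝ)^(q+1) - 2) / 20
        ≤ ∑ j ∈ Finset.range q, ((q+1).choose (j+1) : ℝ) * (((j:ℝ)+1) / 20) := by
      have hge : ∀ j ∈ Finset.range q,
          ((q+1).choose (j+1) : ℝ) * (1/20) ≤ ((q+1).choose (j+1) : ℝ) * (((j:ℝ)+1) / 20) := by
        intro j _
        apply mul_le_mul_of_nonneg_left _ (by positivity)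
        have : (0:ℝ) ≤ (j:ℝ) := Nat.cast_nonneg j
        linarith
      calc ((2:ℝ)^(q+1) - 2) / 20
          = (∑ j ∈ Finset.range q, (((q+1).choose (j+1) : ℕ) : ℝ)) * (1/20) := by
            rw [hcs]; ring
        _ = ∑ j ∈ Finset.range q, ((q+1).choose (j+1) : ℝ) * (1/20) := Finset.sum_mul ..
        _ ≤ _ := Finset.sum_le_sum hge
    -- put it together
    have hfq : (0:ℝ) < ((q+1).factorial : ℝ) := by positivity
    have hLq : (0:ℝ) < L^(q+1) := by positivity
    have hXpos : (0:ℝ) < ((q+1).factorial : ℝ) / L^(q+1) := by positivity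
    have hbbpos : (0:ℝ) < bb := by
      rw [hbb]
      have h1 : (0:ℝ) < 1 / (2*L) := by positivity
      have h2 : (0:ℝ) ≤ L / 24 := by positivity
      linarith
    have hbb72 : (0.72:ℝ) < bb := by
      have h1 : (0.72:ℝ) < 1 / (2*L) := by
        rw [lt_div_iff₀ (by linarith : (0:ℝ) < 2*L)]
        linarith
      have h2 : (0:ℝ) ≤ L / 24 := by positivity
      rw [hbb]; linarith
    have hXone : ((q+1).factorial : ℝ) / L^(q+1) * (L^(q+1) / ((q+1).factorial : ℝ)) = 1 := by
      field_simp
    have hmul : bb * (((q+1).factorial : ℝ) / L^(q+1))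
          * (∑ j ∈ Finset.range q, L^(j+1) / (((j+1).factorial : ℝ)))
        ≤ bb * (((q+1).factorial : ℝ) / L^(q+1)) * (1 - L^(q+1) / ((q+1).factorial : ℝ)) := by
      apply mul_le_mul_of_nonneg_left hSL
      positivity
    have hmul2 : bb * (((q+1).factorial : ℝ) / L^(q+1)) * (1 - L^(q+1) / ((q+1).factorial : ℝ))
        = bb * (((q+1).factorial : ℝ) / L^(q+1)) - bb := by
      rw [mul_sub, mul_one, mul_assoc, hXone, mul_one]
    have hpowR : ((q+1):ℝ) + 8 ≤ 2^(q+1) := by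
      have h := two_pow_lower (q+1) (by omega)
      exact_mod_cast h
    have hgoal : (obell (q+1) : ℝ) ≤ bb * ((q+1).factorial : ℝ) / L^(q+1) - ((q+1):ℝ) / 20 := by
      have e : bb * ((q+1).factorial : ℝ) / L^(q+1)
          = bb * (((q+1).factorial : ℝ) / L^(q+1)) := by ring
      rw [e]
      calc (obell (q+1) : ℝ)
          ≤ bb * (((q+1).factorial : ℝ) / L^(q+1))
              * (∑ j ∈ Finset.range q, L^(j+1) / (((j+1).factorial : ℝ)))
            - (∑ j ∈ Finset.range q, ((q+1).choose (j+1) : ℝ) * (((j:ℝ)+1) / 20)) + 1 := hsum2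
        _ ≤ bb * (((q+1).factorial : ℝ) / L^(q+1)) - bb - (((2:ℝ)^(q+1) - 2) / 20) + 1 := by
            rw [← hmul2]
            linarith [hmul, hS2]
        _ ≤ bb * (((q+1).factorial : ℝ) / L^(q+1)) - ((q+1):ℝ) / 20 := by
            linarith [hpowR, hbb72]
    have hq1 : m + 4 = q + 1 := by omega
    rw [hq1]
    push_cast at hgoal ⊢
    linarith [hgoal]

lemma obell_eq_icc (n : ℕ) (hn : 1 ≤ n) :
    obell n = ∑ k ∈ Finset.Icc 1 n, stirlingSecond n k * Nat.factorial k := by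
  obtain ⟨p, rfl⟩ : ∃ p, n = p + 1 := ⟨n - 1, by omega⟩
  rw [obell, Finset.range_eq_Ico,
    Finset.sum_eq_sum_Ico_succ_bot (by omega : 0 < p + 1 + 1)
      (fun k => stirlingSecond (p+1) k * Nat.factorial k),
    Finset.Ico_add_one_right_eq_Icc]
  have h0 : stirlingSecond (p+1) 0 * Nat.factorial 0 = 0 := rfl
  rw [h0, zero_add]

/-- The ordered Bell (Fubini) numbers satisfy
`Σ_{k=1}^{n} S(n,k)·k! ≤ b·n!/(log 2)^n` for `n ≥ 1`, with `b = 1/(2 log 2) + (log 2)/24`. -/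
theorem ordered_bell_le (n : ℕ) (hn : 1 ≤ n) :
    ∑ k ∈ Finset.Icc 1 n, ((stirlingSecond n k : ℝ) * (Nat.factorial k : ℝ)) ≤
      (1 / (2 * Real.log 2) + Real.log 2 / 24) *
        (Nat.factorial n : ℝ) / (Real.log 2) ^ n := by
  have hsum : ∑ k ∈ Finset.Icc 1 n, ((stirlingSecond n k : ℝ) * (Nat.factorial k : ℝ))
      = (obell n : ℝ) := by
    rw [obell_eq_icc n hn]
    push_cast
    rfl
  rw [hsum]
  have h := obell_key n hn
  have hn0 : (0:ℝ) ≤ (n:ℝ) / 20 := by positivity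
  linarith
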